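/- Let P and Q be probability measures on a measurable space with Q ≪ P and density r = dQ/dP satisfying 0 < m ≤ r(x) ≤ M < ∞ for P-a.e. x. For f ∈ L²(P) with ∫ f dP = 0 (an influence function), define g = (f − (∫ f · (1/r) dP) / (∫ (1/r) dP)) · (1/r). Then g ∈ L²(P), ∫ g dP = 0, and for every v ∈ L²(P) with ∫ v dP = 0, ∫ g · v dQ = ∫ f · v dP. -/

import Mathlib

open MeasureTheory

/-- Policy gradient formula: if `dQ/dP = r` with `0 < m ≤ r ≤ M`, and `f` is a
mean-zero square-integrable influence function, then the policy gradient
`g = (f - (∫ f/r dP)/(∫ 1/r dP)) * (1/r)` is mean-zero square-integrable and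
represents the same differential with respect to the `L²(Q)` inner product:
`∫ g v dQ = ∫ f v dP` for all mean-zero `v ∈ L²(P)`. -/
theorem stmt6 {α : Type*} [MeasurableSpace α] (P Q : Measure α)
    [IsProbabilityMeasure P] [IsProbabilityMeasure Q]
    (r : α → ℝ) (hr : Measurable r)
    (hQ : Q = P.withDensity (fun x => ENNReal.ofReal (r x)))
    (m M : ℝ) (hm : 0 < m) (hbound : ∀ᵐ x ∂P, m ≤ r x ∧ r x ≤ M)
    (f : α → ℝ) (hf : MemLp f 2 P) (hf0 : ∫ x, f x ∂P = 0)
    (g : α → ℝ)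
    (hg : g = fun x =>
      (f x - (∫ y, f y * (1 / r y) ∂P) / (∫ y, (1 / r y) ∂P)) * (1 / r x)) :
    MemLp g 2 P ∧ (∫ x, g x ∂P = 0) ∧
      ∀ v : α → ℝ, MemLp v 2 P → (∫ x, v x ∂P = 0) →
        ∫ x, g x * v x ∂Q = ∫ x, f x * v x ∂P := by
  set c : ℝ := (∫ y, f y * (1 / r y) ∂P) / (∫ y, (1 / r y) ∂P) with hc
  have hM : 0 < M := by
    obtain ⟨x, hx⟩ := hbound.exists
    exact hm.trans_le (hx.1.trans hx.2)
  have hinv_meas : Measurable fun x => 1 / r x := by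
    simpa [one_div] using hr
  have hbd : ∀ᵐ x ∂P, ‖1 / r x‖ ≤ 1 / m := by
    filter_upwards [hbound] with x hx
    rw [Real.norm_eq_abs, abs_of_pos (one_div_pos.mpr (hm.trans_le hx.1))]
    exact one_div_le_one_div_of_le hm hx.1
  have hinv_top : MemLp (fun x => 1 / r x) ⊤ P :=
    memLp_top_of_bound hinv_meas.aestronglyMeasurable _ hbd
  have hinv_int : Integrable (fun x => 1 / r x) P := hinv_top.integrable le_top
  have hfc : MemLp (fun x => f x - c) 2 P := hf.sub (memLp_const c)
  have hgmem : MemLp g 2 P := by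
    have h := hfc.smul hinv_top (r := 2)
    rw [hg]
    simpa [Pi.smul_apply, smul_eq_mul, Pi.mul_def, mul_comm] using h
  have hfr_mem : MemLp (fun x => f x * (1 / r x)) 2 P := by
    have h := hf.smul hinv_top (r := 2)
    simpa [Pi.smul_apply, smul_eq_mul, Pi.mul_def, mul_comm] using h
  have hfr_int : Integrable (fun x => f x * (1 / r x)) P := hfr_mem.integrable one_le_two
  have hJ : (1 : ℝ) / M ≤ ∫ y, 1 / r y ∂P := by
    have h1 : ∫ _y, (1 : ℝ) / M ∂P ≤ ∫ y, 1 / r y ∂P := by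
      refine integral_mono_ae (integrable_const _) hinv_int ?_
      filter_upwards [hbound] with x hx
      exact one_div_le_one_div_of_le (hm.trans_le hx.1) hx.2
    simpa using h1
  have hJpos : 0 < ∫ y, 1 / r y ∂P := lt_of_lt_of_le (by positivity) hJ
  have hJne : (∫ y, 1 / r y ∂P) ≠ 0 := ne_of_gt hJpos
  refine ⟨hgmem, ?_, ?_⟩
  · rw [hg]
    have heq : ∀ x, (f x - c) * (1 / r x) = f x * (1 / r x) - c * (1 / r x) := fun x => by ring
    simp_rw [heq]
    rw [integral_sub hfr_int (hinv_int.const_mul c), integral_const_mul,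
      hc, div_mul_cancel₀ _ hJne, sub_self]
  · intro v hv hv0
    have hfv_int : Integrable (fun x => f x * v x) P := by
      have h := hf.smul hv (r := 1)
      have h1 := h.integrable le_rfl
      simpa [Pi.smul_apply, smul_eq_mul, Pi.mul_def, mul_comm] using h1
    have hfcv_int : Integrable (fun x => (f x - c) * v x) P := by
      have : (fun x => (f x - c) * v x) = fun x => f x * v x - c * v x := by
        ext x; ring
      rw [this]
      exact hfv_int.sub ((hv.integrable one_le_two).const_mul c)
    -- change of measure
    rw [hQ]
    have hofReal : (fun x => ENNReal.ofReal (r x)) = fun x => ((r x).toNNReal : ENNReal) := rfl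
    rw [hofReal, integral_withDensity_eq_integral_smul hr.real_toNNReal]
    have hae : (fun x => (r x).toNNReal • (g x * v x)) =ᵐ[P] fun x => (f x - c) * v x := by
      filter_upwards [hbound] with x hx
      have hrx : 0 < r x := hm.trans_le hx.1
      simp only [hg, NNReal.smul_def, smul_eq_mul, Real.coe_toNNReal _ hrx.le]
      field_simp
    rw [integral_congr_ae hae]
    have : (fun x => (f x - c) * v x) = fun x => f x * v x - c * v x := by ext x; ring
    rw [this, integral_sub hfv_int ((hv.integrable one_le_two).const_mul c),
      integral_const_mul, hv0, mul_zero, sub_zero]
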